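/- Let f(x) = x+1 and g(x) = x³ be homeomorphisms of ℝ. Then the group of homeomorphisms generated by f and g acts topologically transitively on ℝ: for any nonempty open sets U, V ⊆ ℝ, there exists h in the generated group with h(U) ∩ V ≠ ∅. -/

import Mathlib

-- growth lemma
lemma aux_grow (m : ℕ) : ∀ a b : ℝ, 2 ≤ a → a < b →
    2 ≤ a ^ 3 ^ m ∧ 2 ^ m * (b - a) ≤ b ^ 3 ^ m - a ^ 3 ^ m := by
  induction m with
  | zero => intro a b ha hab; simp only [pow_zero, pow_one, one_mul]; exact ⟨ha, le_refl _⟩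
  | succ m ih =>
    intro a b ha hab
    have h2 : (2:ℝ) ≤ a ^ 3 := by nlinarith [sq_nonneg a, sq_nonneg (a-1)]
    have h3 : a ^ 3 < b ^ 3 := by nlinarith [sq_nonneg (a+b), sq_nonneg (a-b), sq_nonneg a, sq_nonneg b]
    have hq : (0:ℝ) ≤ a^2 + a*b + b^2 - 2 := by nlinarith [sq_nonneg a, sq_nonneg b]
    have h4 : 2 * (b - a) ≤ b ^ 3 - a ^ 3 := by nlinarith [mul_nonneg (sub_pos.mpr hab).le hq]
    obtain ⟨H1, H2⟩ := ih (a ^ 3) (b ^ 3) h2 h3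
    have e1 : (a ^ 3) ^ 3 ^ m = a ^ 3 ^ (m+1) := by rw [← pow_mul]; ring_nf
    have e2 : (b ^ 3) ^ 3 ^ m = b ^ 3 ^ (m+1) := by rw [← pow_mul]; ring_nf
    constructor
    · rw [← e1]; exact H1
    · rw [← e1, ← e2]
      have : (2:ℝ)^m * (2*(b-a)) ≤ 2^m * (b^3 - a^3) := by
        apply mul_le_mul_of_nonneg_left h4 (by positivity)
      calc (2:ℝ) ^ (m+1) * (b - a) = 2^m * (2*(b-a)) := by ring
        _ ≤ 2^m * (b^3 - a^3) := this
        _ ≤ (b^3)^3^m - (a^3)^3^m := H2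



/-- Let `f(x) = x + 1` and `g(x) = x³` be (orientation-preserving) homeomorphisms of `ℝ`.
The group generated by `f` and `g` acts topologically transitively on `ℝ`: for any nonempty
open `U, V ⊆ ℝ` there is `h` in the generated group with `h(U) ∩ V ≠ ∅`. -/
theorem stmt_3 (f g : ℝ ≃o ℝ) (hf : ∀ x : ℝ, f x = x + 1) (hg : ∀ x : ℝ, g x = x ^ 3) :
    ∀ U V : Set ℝ, IsOpen U → IsOpen V → U.Nonempty → V.Nonempty →
      ∃ h ∈ Subgroup.closure ({f, g} : Set (ℝ ≃o ℝ)), ((h '' U) ∩ V).Nonempty := by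
  intro U V hUo hVo hUne hVne
  -- basic computation lemmas
  have hmul : ∀ (a b : ℝ ≃o ℝ) (x : ℝ), (a * b) x = a (b x) := fun _ _ _ => rfl
  have hfinv : ∀ x : ℝ, f⁻¹ x = x - 1 := by
    intro x
    have : f (x - 1) = x := by rw [hf]; ring
    have h2 : f (f⁻¹ x) = x := f.apply_symm_apply x
    exact f.injective (h2.trans this.symm)
  have hfz : ∀ (n : ℤ) (x : ℝ), (f ^ n) x = x + n := by
    intro n
    induction n using Int.induction_on with
    | zero => intro x; simp
    | succ k ih =>
      intro x
      have : f ^ ((k : ℤ) + 1) = f ^ (k : ℤ) * f := by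
        rw [zpow_add_one]
      rw [this, hmul, ih, hf]
      push_cast; ring
    | pred k ih =>
      intro x
      have : f ^ (-(k : ℤ) - 1) = f ^ (-(k : ℤ)) * f⁻¹ := by
        rw [zpow_sub_one]
      rw [this, hmul, ih, hfinv]
      push_cast; ring
  have hgm : ∀ (m : ℕ) (x : ℝ), (g ^ m) x = x ^ 3 ^ m := by
    intro m
    induction m with
    | zero => intro x; simp
    | succ k ih =>
      intro x
      rw [pow_succ, hmul, ih, hg, ← pow_mul]
      ring_nf
  -- pick points and a ball inside U
  obtain ⟨u, hu⟩ := hUne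
  obtain ⟨v, hv⟩ := hVne
  obtain ⟨ε, hε, hball⟩ := Metric.isOpen_iff.mp hUo u hu
  have hIoo : Set.Ioo (u - ε) (u + ε) ⊆ U := by
    rw [← Real.ball_eq_Ioo]; exact hball
  -- shift right of 2
  set k : ℤ := ⌈2 - (u - ε)⌉ with hk
  set a : ℝ := u - ε + k with hadef
  set b : ℝ := u + ε + k with hbdef
  have ha2 : 2 ≤ a := by
    have := Int.le_ceil (2 - (u - ε))
    simp only [hadef, hk]; linarith
  have hab : a < b := by simp only [hadef, hbdef]; linarith
  -- choose m so that the stretched interval has length > 2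
  obtain ⟨m, hm⟩ := pow_unbounded_of_one_lt (R := ℝ) (1 / ε) one_lt_two
  obtain ⟨hA2, hBA⟩ := aux_grow m a b ha2 hab
  set A : ℝ := a ^ 3 ^ m with hAdef
  set B : ℝ := b ^ 3 ^ m with hBdef
  have hlen : 2 < B - A := by
    have h1 : 1 < 2 ^ m * ε := by
      rw [div_lt_iff₀ hε] at hm; linarith [hm]
    have h2 : b - a = 2 * ε := by simp only [hadef, hbdef]; ring
    have := hBA
    rw [h2] at this
    nlinarith [this]
  -- choose the integer translation n
  set n : ℤ := ⌊v - A⌋ - 1 with hn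
  set t : ℝ := v - n with ht
  have htA : A < t := by
    have := Int.floor_le (v - A)
    simp only [ht, hn]; push_cast; linarith
  have htB : t < B := by
    have := Int.sub_one_lt_floor (v - A)
    simp only [ht, hn]; push_cast; linarith
  -- pull t back through g^m
  set x : ℝ := (g ^ m).symm t with hx
  have hgx : (g ^ m) x = t := (g ^ m).apply_symm_apply t
  have hax : a < x := by
    have : (g ^ m) a < (g ^ m) x := by rw [hgx, hgm]; exact htA
    exact (g ^ m).lt_iff_lt.mp this
  have hxb : x < b := by
    have : (g ^ m) x < (g ^ m) b := by rw [hgx, hgm]; exact htB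
    exact (g ^ m).lt_iff_lt.mp this
  -- pull back through f^k
  set y : ℝ := x - k with hy
  have hyU : y ∈ U := by
    apply hIoo
    constructor
    · simp only [hy]; simp only [hadef] at hax; linarith
    · simp only [hy]; simp only [hbdef] at hxb; linarith
  -- the element h
  refine ⟨f ^ n * g ^ m * f ^ k, ?_, ?_⟩
  · have hfc : f ∈ Subgroup.closure ({f, g} : Set (ℝ ≃o ℝ)) :=
      Subgroup.subset_closure (Set.mem_insert _ _)
    have hgc : g ∈ Subgroup.closure ({f, g} : Set (ℝ ≃o ℝ)) :=
      Subgroup.subset_closure (Set.mem_insert_of_mem _ rfl)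
    exact mul_mem (mul_mem (zpow_mem hfc n) (pow_mem hgc m)) (zpow_mem hfc k)
  · refine ⟨v, ⟨y, hyU, ?_⟩, hv⟩
    have h1 : (f ^ k) y = x := by rw [hfz]; simp [hy]
    have h3 : (f ^ n) t = v := by rw [hfz]; simp [ht]
    calc (f ^ n * g ^ m * f ^ k) y = (f ^ n) ((g ^ m) ((f ^ k) y)) := rfl
      _ = v := by rw [h1, hgx, h3]
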